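/- If ψ : [0,T] → ℝ is continuous, then the function A(t) = Λ(ψ)(t) is differentiable on (0,T), satisfies A(0) = a₀, and for every t ∈ (0,T) solves the Bernoulli-type logistic equation A'(t) = r_A A(t)(1 − A(t)/k_A) − (μ_A + ε_A) A(t) − α_A γ_A |ψ(t)| A(t). -/

import Mathlib

open MeasureTheory Set intervalIntegral

/-- The explicit solution operator `Λ` for the tumor-cell equation (Bernoulli's method). -/
noncomputable def Lam (rA kA αA γA lam a₀ : ℝ) (ψ : ℝ → ℝ) (t : ℝ) : ℝ :=
  (a₀ * kA * Real.exp (lam * t) * Real.exp (-(αA * γA) * ∫ ξ in (0:ℝ)..t, |ψ ξ|)) /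
    (kA + a₀ * rA *
      ∫ s in (0:ℝ)..t, Real.exp (lam * s) * Real.exp (-(αA * γA) * ∫ ξ in (0:ℝ)..s, |ψ ξ|))

/-- For continuous `ψ`, `A = Λ(ψ)` solves the Bernoulli-type logistic tumor-cell ODE
`A' = r_A A (1 − A/k_A) − (μ_A + ε_A) A − α_A γ_A |ψ| A` on `(0,T)` with `A(0) = a₀`. -/
theorem Lam_solves_ode
    (T rA kA μA εA αA γA a₀ : ℝ)
    (hT : 0 < T) (hrA : 0 < rA) (hkA : 0 < kA)
    (hμA : 0 ≤ μA) (hεA : 0 ≤ εA) (hαA : 0 ≤ αA) (hγA : 0 ≤ γA) (ha₀ : 0 ≤ a₀)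
    (ψ : ℝ → ℝ) (hcont : ContinuousOn ψ (Icc (0 : ℝ) T)) :
    Lam rA kA αA γA (rA - (μA + εA)) a₀ ψ 0 = a₀ ∧
    ∀ t ∈ Ioo (0 : ℝ) T,
      HasDerivAt (Lam rA kA αA γA (rA - (μA + εA)) a₀ ψ)
        (rA * Lam rA kA αA γA (rA - (μA + εA)) a₀ ψ t *
            (1 - Lam rA kA αA γA (rA - (μA + εA)) a₀ ψ t / kA) -
          (μA + εA) * Lam rA kA αA γA (rA - (μA + εA)) a₀ ψ t -
          αA * γA * |ψ t| * Lam rA kA αA γA (rA - (μA + εA)) a₀ ψ t) t := by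
  set lam := rA - (μA + εA) with hlam
  set F : ℝ → ℝ := fun s => ∫ ξ in (0:ℝ)..s, |ψ ξ| with hF
  set E : ℝ → ℝ := fun s => Real.exp (lam * s) * Real.exp (-(αA * γA) * F s) with hE
  set G : ℝ → ℝ := fun t => kA + a₀ * rA * ∫ s in (0:ℝ)..t, E s with hG
  have hψabs : ContinuousOn (fun x => |ψ x|) (Icc (0:ℝ) T) := hcont.abs
  have hsub : ∀ u ∈ Icc (0:ℝ) T, uIcc (0:ℝ) u ⊆ Icc (0:ℝ) T := by
    intro u hu
    rw [uIcc_of_le hu.1]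
    exact Icc_subset_Icc le_rfl hu.2
  have hψint : ∀ u ∈ Icc (0:ℝ) T, IntervalIntegrable (fun x => |ψ x|) volume 0 u :=
    fun u hu => (hψabs.mono (hsub u hu)).intervalIntegrable
  have hFcont : ContinuousOn F (Icc (0:ℝ) T) := by
    have h1 : IntegrableOn (fun x => |ψ x|) (uIcc (0:ℝ) T) volume := by
      rw [uIcc_of_le hT.le]
      exact hψabs.integrableOn_Icc
    have := intervalIntegral.continuousOn_primitive_interval h1
    rwa [uIcc_of_le hT.le] at this
  have hEcont : ContinuousOn E (Icc (0:ℝ) T) := by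
    refine ContinuousOn.mul ?_ ?_
    · exact (Real.continuous_exp.comp (continuous_const.mul continuous_id)).continuousOn
    · exact Real.continuous_exp.comp_continuousOn (continuousOn_const.mul hFcont)
  have hEint : ∀ u ∈ Icc (0:ℝ) T, IntervalIntegrable E volume 0 u :=
    fun u hu => (hEcont.mono (hsub u hu)).intervalIntegrable
  have hEpos : ∀ u : ℝ, 0 < E u := fun u =>
    mul_pos (Real.exp_pos _) (Real.exp_pos _)
  have hGpos : ∀ u ∈ Icc (0:ℝ) T, 0 < G u := by
    intro u hu
    have hint : 0 ≤ ∫ s in (0:ℝ)..u, E s :=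
      intervalIntegral.integral_nonneg hu.1 (fun x _ => (hEpos x).le)
    have : 0 ≤ a₀ * rA * ∫ s in (0:ℝ)..u, E s :=
      mul_nonneg (mul_nonneg ha₀ hrA.le) hint
    exact add_pos_of_pos_of_nonneg hkA this
  have hLamEq : Lam rA kA αA γA lam a₀ ψ = fun t => a₀ * kA * E t / G t := by
    funext t
    simp only [Lam, hE, hG, hF, mul_assoc]
  constructor
  · rw [hLamEq]
    simp only [hE, hF, hG, intervalIntegral.integral_same, mul_zero, neg_zero, zero_mul,
      Real.exp_zero, mul_one, add_zero]
    rw [mul_div_assoc, div_self hkA.ne', mul_one]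
  · intro t ht
    have htIcc : t ∈ Icc (0:ℝ) T := ⟨ht.1.le, ht.2.le⟩
    have hmem : Icc (0:ℝ) T ∈ nhds t := Icc_mem_nhds ht.1 ht.2
    have hF' : HasDerivAt F (|ψ t|) t :=
      intervalIntegral.integral_hasDerivAt_right (hψint t htIcc)
        ⟨Icc (0:ℝ) T, hmem, hψabs.aestronglyMeasurable measurableSet_Icc⟩
        (hψabs.continuousAt hmem)
    have hE' : HasDerivAt E ((lam - αA * γA * |ψ t|) * E t) t := by
      have h1 : HasDerivAt (fun s : ℝ => lam * s) lam t := by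
        simpa using (hasDerivAt_id t).const_mul lam
      have h2 : HasDerivAt (fun s => -(αA * γA) * F s) (-(αA * γA) * |ψ t|) t :=
        hF'.const_mul _
      have h3 : HasDerivAt (fun x => Real.exp (lam * x) * Real.exp (-(αA * γA) * F x)) _ t :=
        (h1.exp).mul (h2.exp)
      convert h3 using 1
      simp only [hE]
      ring
    have hG' : HasDerivAt G (a₀ * rA * E t) t := by
      have h0 : HasDerivAt (fun u => ∫ s in (0:ℝ)..u, E s) (E t) t :=
        intervalIntegral.integral_hasDerivAt_right (hEint t htIcc)
          ⟨Icc (0:ℝ) T, hmem, hEcont.aestronglyMeasurable measurableSet_Icc⟩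
          (hEcont.continuousAt hmem)
      exact ((h0.const_mul (a₀ * rA)).const_add kA)
    have hGt : 0 < G t := hGpos t htIcc
    have hnum : HasDerivAt (fun u => a₀ * kA * E u)
        (a₀ * kA * ((lam - αA * γA * |ψ t|) * E t)) t := hE'.const_mul _
    have hA : HasDerivAt (fun u => a₀ * kA * E u / G u) _ t := hnum.div hG' hGt.ne'
    rw [hLamEq]
    simp only []
    convert hA using 1
    field_simp
    ring
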